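/- For every τ ∈ (0,1) there exist constants c_τ, C_τ > 0 such that for all real σ: c_τ · (1 + σ²)^{-1/2} · h(σ)^{1/2} ≤ |Γ(τ + iσ)| ≤ C_τ · h(σ)^{1/2}, where h(σ) = πσ / sinh(πσ) for σ ≠ 0 and h(0) = 1. -/

import Mathlib

/- STATEMENT 12: Lerch-type two-sided bound for `|Γ(τ + iσ)|`, `τ ∈ (0,1)`, in terms of
`h(σ) = πσ/sinh(πσ)` (with `h(0) = 1`). -/

/-- `h(σ) = πσ / sinh(πσ)` for `σ ≠ 0`, and `h(0) = 1`. -/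
noncomputable def hfun (σ : ℝ) : ℝ :=
  if σ = 0 then 1 else Real.pi * σ / Real.sinh (Real.pi * σ)

lemma hfun_pos (σ : ℝ) : 0 < hfun σ := by
  unfold hfun
  rcases lt_trichotomy σ 0 with h | h | h
  · rw [if_neg h.ne]
    apply div_pos_of_neg_of_neg
    · nlinarith [Real.pi_pos]
    · exact Real.sinh_neg_iff.2 (by nlinarith [Real.pi_pos])
  · simp [h]
  · rw [if_neg h.ne']
    exact div_pos (by nlinarith [Real.pi_pos]) (Real.sinh_pos_iff.2 (by nlinarith [Real.pi_pos]))

lemma hfun_neg (σ : ℝ) : hfun (-σ) = hfun σ := by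
  unfold hfun
  rcases eq_or_ne σ 0 with h | h
  · simp [h]
  · rw [if_neg (neg_ne_zero.2 h), if_neg h, mul_neg, Real.sinh_neg, neg_div_neg_eq]

lemma abs_Gamma_one_add_sq (σ : ℝ) :
    ‖Complex.Gamma (1 + Complex.I * σ)‖ ^ 2 = hfun σ := by
  have hconj : (starRingEnd ℂ) (1 + Complex.I * σ) = 1 - Complex.I * σ := by
    simp [Complex.ext_iff]
  have h1 : ((‖Complex.Gamma (1 + Complex.I * σ)‖ ^ 2 : ℝ) : ℂ)
      = Complex.Gamma (1 + Complex.I * σ) * Complex.Gamma (1 - Complex.I * σ) := by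
    rw [← hconj, Complex.Gamma_conj, Complex.mul_conj, Complex.normSq_eq_norm_sq]
  rcases eq_or_ne σ 0 with h | h
  · subst h
    simp [hfun, Complex.Gamma_one]
  · have hIσ : Complex.I * σ ≠ 0 := by
      simp [Complex.I_ne_zero, Complex.ofReal_eq_zero, h]
    have h2 : Complex.Gamma (1 + Complex.I * σ) = Complex.I * σ * Complex.Gamma (Complex.I * σ) := by
      rw [add_comm]
      exact Complex.Gamma_add_one _ hIσ
    have h3 : Complex.Gamma (Complex.I * σ) * Complex.Gamma (1 - Complex.I * σ)
        = ↑Real.pi / Complex.sin (↑Real.pi * (Complex.I * σ)) :=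
      Complex.Gamma_mul_Gamma_one_sub _
    have hsin : Complex.sin (↑Real.pi * (Complex.I * σ)) = ↑(Real.sinh (Real.pi * σ)) * Complex.I := by
      have h4 : (↑Real.pi : ℂ) * (Complex.I * σ) = (↑(Real.pi * σ) : ℂ) * Complex.I := by
        push_cast; ring
      rw [h4, Complex.sin_mul_I, Complex.ofReal_sinh]
    have hsinh : Real.sinh (Real.pi * σ) ≠ 0 := by
      rcases lt_trichotomy σ 0 with h' | h' | h'
      · exact ne_of_lt (Real.sinh_neg_iff.2 (by nlinarith [Real.pi_pos]))
      · exact absurd h' h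
      · exact ne_of_gt (Real.sinh_pos_iff.2 (by nlinarith [Real.pi_pos]))
    have key : ∀ a : ℂ, a ≠ 0 →
        Complex.I * ↑σ * (↑Real.pi / (a * Complex.I)) = ↑Real.pi * ↑σ / a := by
      intro a ha
      field_simp
    have hs : ((Real.sinh (Real.pi * σ) : ℝ) : ℂ) ≠ 0 := by
      exact_mod_cast hsinh
    have hfin : ((‖Complex.Gamma (1 + Complex.I * σ)‖ ^ 2 : ℝ) : ℂ)
        = ((Real.pi * σ / Real.sinh (Real.pi * σ) : ℝ) : ℂ) := by
      rw [h1, h2, mul_assoc, h3, hsin, key _ hs, Complex.ofReal_div, Complex.ofReal_mul]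
    have := Complex.ofReal_inj.1 hfin
    rw [this, hfun, if_neg h]

lemma abs_Gamma_one_add (σ : ℝ) :
    ‖Complex.Gamma (1 + Complex.I * σ)‖ = Real.sqrt (hfun σ) := by
  rw [← abs_Gamma_one_add_sq, Real.sqrt_sq (norm_nonneg _)]

lemma beta_piece (τ : ℝ) (hτ0 : 0 < τ) (hτ1 : τ < 1) (σ : ℝ) :
    ‖Complex.betaIntegral ((τ:ℂ) + Complex.I * σ) ((1-τ : ℝ):ℂ)‖
      ≤ Real.Gamma τ * Real.Gamma (1-τ) := by
  have hre : ∀ x : ℝ, 0 ≤ x →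
      ‖(x:ℂ) ^ ((τ:ℂ) + Complex.I * σ - 1)‖ = x ^ (τ - 1) := by
    intro x hx
    rcases hx.eq_or_lt with h | h
    · rw [← h, Complex.ofReal_zero, Complex.zero_cpow, norm_zero, Real.zero_rpow (by linarith)]
      intro h0
      have := congrArg Complex.re h0
      simp at this
      linarith
    · rw [Complex.norm_cpow_eq_rpow_re_of_pos h]
      congr 1
      simp
  have hre2 : ∀ x : ℝ, 0 ≤ x →
      ‖(x:ℂ) ^ (((1-τ:ℝ):ℂ) - 1)‖ = x ^ (-τ) := by
    intro x hx
    rcases hx.eq_or_lt with h | h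
    · rw [← h, Complex.ofReal_zero, Complex.zero_cpow, norm_zero, Real.zero_rpow (by linarith)]
      intro h0
      have := congrArg Complex.re h0
      simp at this
      linarith
    · rw [Complex.norm_cpow_eq_rpow_re_of_pos h]
      congr 1
      simp
  have hval : (∫ x in (0:ℝ)..1, x ^ (τ-1) * (1-x) ^ (-τ)) = Real.Gamma τ * Real.Gamma (1-τ) := by
    have hb := Complex.Gamma_mul_Gamma_eq_betaIntegral
      (s := ((τ:ℝ):ℂ)) (t := ((1-τ:ℝ):ℂ)) (by simpa using hτ0) (by simp; linarith)
    have hsum : ((τ:ℝ):ℂ) + ((1-τ:ℝ):ℂ) = 1 := by push_cast; ring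
    rw [hsum, Complex.Gamma_one, one_mul, Complex.Gamma_ofReal, Complex.Gamma_ofReal] at hb
    have hofreal : Complex.betaIntegral ((τ:ℝ):ℂ) ((1-τ:ℝ):ℂ)
        = ((∫ x in (0:ℝ)..1, x ^ (τ-1) * (1-x) ^ (-τ) : ℝ) : ℂ) := by
      rw [Complex.betaIntegral, ← intervalIntegral.integral_ofReal]
      apply intervalIntegral.integral_congr
      intro x hx
      rw [Set.uIcc_of_le (by norm_num)] at hx
      obtain ⟨hx0, hx1⟩ := hx
      beta_reduce
      have e1 : ((τ:ℝ):ℂ) - 1 = ((τ - 1 : ℝ):ℂ) := by push_cast; ring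
      have e2 : ((1-τ:ℝ):ℂ) - 1 = ((-τ : ℝ):ℂ) := by push_cast; ring
      have e3 : (1 : ℂ) - (x:ℂ) = ((1 - x : ℝ):ℂ) := by push_cast; ring
      rw [e1, e2, e3, ← Complex.ofReal_cpow hx0, ← Complex.ofReal_cpow (by linarith)]
      push_cast
      ring
    rw [hofreal] at hb
    exact_mod_cast hb.symm
  rw [Complex.betaIntegral, ← hval]
  refine (intervalIntegral.norm_integral_le_integral_norm (by norm_num)).trans_eq ?_
  apply intervalIntegral.integral_congr
  intro x hx
  rw [Set.uIcc_of_le (by norm_num)] at hx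
  obtain ⟨hx0, hx1⟩ := hx
  simp only [norm_mul]
  have e3 : (1 : ℂ) - (x:ℂ) = ((1 - x : ℝ):ℂ) := by push_cast; ring
  rw [e3, hre x hx0, hre2 (1-x) (by linarith)]

lemma Gamma_upper (τ : ℝ) (hτ0 : 0 < τ) (hτ1 : τ < 1) (σ : ℝ) :
    ‖Complex.Gamma ((τ:ℂ) + Complex.I * σ)‖ ≤ Real.Gamma τ * Real.sqrt (hfun σ) := by
  have h1τ : 0 < Real.Gamma (1-τ) := Real.Gamma_pos_of_pos (by linarith)
  have hG := Complex.Gamma_mul_Gamma_eq_betaIntegral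
    (s := (τ:ℂ) + Complex.I * σ) (t := ((1-τ:ℝ):ℂ))
    (by simp [hτ0]) (by simp; linarith)
  have hsum : (τ:ℂ) + Complex.I * σ + ((1-τ:ℝ):ℂ) = 1 + Complex.I * σ := by push_cast; ring
  rw [hsum] at hG
  have key : ‖Complex.Gamma ((τ:ℂ) + Complex.I * σ)‖ * Real.Gamma (1-τ)
      ≤ (Real.Gamma τ * Real.sqrt (hfun σ)) * Real.Gamma (1-τ) := by
    calc ‖Complex.Gamma ((τ:ℂ) + Complex.I * σ)‖ * Real.Gamma (1-τ)
        = ‖Complex.Gamma ((τ:ℂ) + Complex.I * σ) * Complex.Gamma ((1-τ:ℝ):ℂ)‖ := by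
          rw [norm_mul, Complex.Gamma_ofReal, Complex.norm_real, Real.norm_eq_abs, abs_of_pos h1τ]
      _ = ‖Complex.Gamma (1 + Complex.I * σ)‖
          * ‖Complex.betaIntegral ((τ:ℂ) + Complex.I * σ) ((1-τ:ℝ):ℂ)‖ := by
          rw [hG, norm_mul]
      _ = Real.sqrt (hfun σ)
          * ‖Complex.betaIntegral ((τ:ℂ) + Complex.I * σ) ((1-τ:ℝ):ℂ)‖ := by
          rw [abs_Gamma_one_add]
      _ ≤ Real.sqrt (hfun σ) * (Real.Gamma τ * Real.Gamma (1-τ)) :=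
          mul_le_mul_of_nonneg_left (beta_piece τ hτ0 hτ1 σ) (Real.sqrt_nonneg _)
      _ = (Real.Gamma τ * Real.sqrt (hfun σ)) * Real.Gamma (1-τ) := by ring
  exact le_of_mul_le_mul_right key h1τ

lemma abs_sinh_le_cosh (x : ℝ) : |Real.sinh x| ≤ Real.cosh x := by
  have h1 := Real.cosh_sub_sinh x
  have h2 := Real.cosh_add_sinh x
  have h3 := Real.exp_pos x
  have h4 := Real.exp_pos (-x)
  rw [abs_le]
  constructor <;> nlinarith

lemma abs_sin_complex_le (a b : ℝ) :
    ‖Complex.sin ((a:ℂ) + (b:ℂ) * Complex.I)‖ ≤ 2 * Real.cosh b := by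
  rw [Complex.sin_add, Complex.cos_mul_I, Complex.sin_mul_I]
  refine (norm_add_le _ _).trans ?_
  rw [norm_mul, norm_mul, norm_mul, ← Complex.ofReal_sin, ← Complex.ofReal_cos,
    ← Complex.ofReal_cosh, ← Complex.ofReal_sinh, Complex.norm_real, Complex.norm_real,
    Complex.norm_real, Complex.norm_real, Complex.norm_I, mul_one]
  simp only [Real.norm_eq_abs]
  have h1 := Real.abs_sin_le_one a
  have h2 := Real.abs_cos_le_one a
  have h3 := abs_sinh_le_cosh b
  have h4 := Real.cosh_pos b
  have h5 : (0:ℝ) ≤ |Real.sinh b| := abs_nonneg _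
  rw [abs_of_pos h4]
  nlinarith [abs_nonneg (Real.sin a), abs_nonneg (Real.cos a)]

lemma hfun_cosh_le (σ : ℝ) :
    hfun σ * Real.cosh (Real.pi * σ) ≤ (Real.pi + 1) * Real.sqrt (1 + σ ^ 2) := by
  have hcore : ∀ s : ℝ, 0 ≤ s →
      hfun s * Real.cosh (Real.pi * s) ≤ (Real.pi + 1) * Real.sqrt (1 + s ^ 2) := by
    intro s hs
    have hsq := Real.sq_sqrt (show (0:ℝ) ≤ 1 + s ^ 2 by positivity)
    have hnn := Real.sqrt_nonneg (1 + s ^ 2)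
    have hr1 : (1:ℝ) ≤ Real.sqrt (1 + s ^ 2) := by nlinarith
    have hr2 : s ≤ Real.sqrt (1 + s ^ 2) := by nlinarith
    rcases hs.eq_or_lt with h | h
    · rw [← h]
      norm_num [hfun, Real.sqrt_one]
      nlinarith [Real.pi_pos]
    · rw [hfun, if_neg h.ne']
      have hx : 0 < Real.pi * s := mul_pos Real.pi_pos h
      have hsinh : 0 < Real.sinh (Real.pi * s) := Real.sinh_pos_iff.2 hx
      rw [div_mul_eq_mul_div, div_le_iff₀ hsinh]
      have e1 := Real.cosh_sub_sinh (Real.pi * s)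
      have e2 : Real.exp (-(Real.pi * s)) ≤ 1 := Real.exp_le_one_iff.2 (by linarith)
      have e3 : Real.pi * s < Real.sinh (Real.pi * s) := Real.self_lt_sinh_iff.2 hx
      have h2 : Real.pi * s + 1 ≤ (Real.pi + 1) * Real.sqrt (1 + s ^ 2) := by
        nlinarith [Real.pi_pos]
      have e4 : Real.exp (-(Real.pi * s)) > 0 := Real.exp_pos _
      nlinarith
  rcases le_or_gt 0 σ with h | h
  · exact hcore σ h
  · have := hcore (-σ) (by linarith)
    rwa [hfun_neg, mul_neg, Real.cosh_neg, neg_sq] at this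

theorem stmt_12 (τ : ℝ) (hτ0 : 0 < τ) (hτ1 : τ < 1) :
    ∃ c C : ℝ, 0 < c ∧ 0 < C ∧ ∀ σ : ℝ,
      c * Real.sqrt (1 + σ ^ 2)⁻¹ * Real.sqrt (hfun σ) ≤
          ‖Complex.Gamma ((τ : ℂ) + Complex.I * (σ : ℂ))‖ ∧
      ‖Complex.Gamma ((τ : ℂ) + Complex.I * (σ : ℂ))‖ ≤
          C * Real.sqrt (hfun σ) := by
  have h1τ : 0 < Real.Gamma (1-τ) := Real.Gamma_pos_of_pos (by linarith)
  have hπ : (0:ℝ) < Real.pi := Real.pi_pos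
  refine ⟨Real.pi / (2 * (Real.pi + 1) * Real.Gamma (1-τ)), Real.Gamma τ,
    by positivity, Real.Gamma_pos_of_pos hτ0, fun σ => ⟨?_, Gamma_upper τ hτ0 hτ1 σ⟩⟩
  set c := Real.pi / (2 * (Real.pi + 1) * Real.Gamma (1-τ)) with hc
  set u := (τ:ℂ) + Complex.I * σ with hu
  -- reflection
  have hrefl := Complex.Gamma_mul_Gamma_one_sub u
  have hsin_ne : Complex.sin (↑Real.pi * u) ≠ 0 := by
    intro h0
    rw [Complex.sin_eq_zero_iff] at h0
    obtain ⟨k, hk⟩ := h0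
    have hπc : (↑Real.pi : ℂ) ≠ 0 := by exact_mod_cast Real.pi_ne_zero
    have hu_eq : u = (k:ℂ) := by
      have : (↑Real.pi : ℂ) * u = ↑Real.pi * (k:ℂ) := by rw [hk]; ring
      exact mul_left_cancel₀ hπc this
    have : τ = (k:ℝ) := by
      have := congrArg Complex.re hu_eq
      simpa [hu] using this
    have hk0 : (0:ℝ) < (k:ℝ) := by rw [← this]; exact hτ0
    have hk1 : (k:ℝ) < 1 := by rw [← this]; exact hτ1
    have : (0:ℤ) < k := by exact_mod_cast hk0
    have : k < 1 := by exact_mod_cast hk1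
    omega
  have habs := congrArg (‖·‖) hrefl
  rw [norm_mul, norm_div, Complex.norm_real, Real.norm_eq_abs, abs_of_pos hπ] at habs
  set A := ‖Complex.Gamma u‖ with hA
  set B := ‖Complex.Gamma (1 - u)‖ with hB
  set s := ‖Complex.sin (↑Real.pi * u)‖ with hs
  have hs_pos : 0 < s := by
    rw [hs]
    exact norm_pos_iff.mpr hsin_ne
  have hAB : A * B = Real.pi / s := habs
  have hABs : A * (B * s) = Real.pi := by
    rw [← mul_assoc, hAB, div_mul_cancel₀ _ hs_pos.ne']
  have hB_pos : 0 < B := by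
    by_contra hb
    push_neg at hb
    have hB0 : B = 0 := le_antisymm hb (norm_nonneg _)
    rw [hB0, zero_mul, mul_zero] at hABs
    exact hπ.ne hABs
  -- bound on B
  have hBle : B ≤ Real.Gamma (1-τ) * Real.sqrt (hfun σ) := by
    have h1u : 1 - u = ((1-τ:ℝ):ℂ) + Complex.I * ((-σ : ℝ):ℂ) := by
      rw [hu]; push_cast; ring
    rw [hB, h1u]
    have := Gamma_upper (1-τ) (by linarith) (by linarith) (-σ)
    rwa [hfun_neg] at this
  -- bound on s
  have hsle : s ≤ 2 * Real.cosh (Real.pi * σ) := by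
    have hform : (↑Real.pi : ℂ) * u = ((Real.pi * τ : ℝ):ℂ) + ((Real.pi * σ : ℝ):ℂ) * Complex.I := by
      rw [hu]; push_cast; ring
    rw [hs, hform]
    exact abs_sin_complex_le _ _
  -- assemble
  have hr_pos : 0 < Real.sqrt (1 + σ ^ 2) := Real.sqrt_pos.2 (by positivity)
  have hinv : Real.sqrt (1 + σ ^ 2)⁻¹ = (Real.sqrt (1 + σ ^ 2))⁻¹ := Real.sqrt_inv _
  have hh_nonneg : 0 ≤ hfun σ := (hfun_pos σ).le
  have hsqh : Real.sqrt (hfun σ) * Real.sqrt (hfun σ) = hfun σ := Real.mul_self_sqrt hh_nonneg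
  have hsqh_nonneg : 0 ≤ Real.sqrt (hfun σ) := Real.sqrt_nonneg _
  have hcosh_pos : 0 < Real.cosh (Real.pi * σ) := Real.cosh_pos _
  have hc_pos : 0 < c := by rw [hc]; positivity
  -- key estimate : c * √inv * √h * (B * s) ≤ π
  have hmain : c * Real.sqrt (1 + σ ^ 2)⁻¹ * Real.sqrt (hfun σ) * (B * s) ≤ Real.pi := by
    have hBs : B * s ≤ (Real.Gamma (1-τ) * Real.sqrt (hfun σ)) * (2 * Real.cosh (Real.pi * σ)) := by
      apply mul_le_mul hBle hsle hs_pos.le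
      positivity
    have step1 : c * Real.sqrt (1 + σ ^ 2)⁻¹ * Real.sqrt (hfun σ) * (B * s)
        ≤ c * Real.sqrt (1 + σ ^ 2)⁻¹ * Real.sqrt (hfun σ)
          * ((Real.Gamma (1-τ) * Real.sqrt (hfun σ)) * (2 * Real.cosh (Real.pi * σ))) := by
      apply mul_le_mul_of_nonneg_left hBs
      positivity
    have step2 : c * Real.sqrt (1 + σ ^ 2)⁻¹ * Real.sqrt (hfun σ)
          * ((Real.Gamma (1-τ) * Real.sqrt (hfun σ)) * (2 * Real.cosh (Real.pi * σ)))
        = (2 * c * Real.Gamma (1-τ)) * ((Real.sqrt (1 + σ ^ 2))⁻¹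
          * (hfun σ * Real.cosh (Real.pi * σ))) := by
      rw [hinv]
      linear_combination (c * (Real.sqrt (1 + σ ^ 2))⁻¹ * Real.Gamma (1-τ) * 2
        * Real.cosh (Real.pi * σ)) * hsqh
    have step3 : (2 * c * Real.Gamma (1-τ)) * ((Real.sqrt (1 + σ ^ 2))⁻¹
          * (hfun σ * Real.cosh (Real.pi * σ)))
        ≤ (2 * c * Real.Gamma (1-τ)) * ((Real.sqrt (1 + σ ^ 2))⁻¹
          * ((Real.pi + 1) * Real.sqrt (1 + σ ^ 2))) := by
      apply mul_le_mul_of_nonneg_left _ (by positivity)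
      apply mul_le_mul_of_nonneg_left (hfun_cosh_le σ) (by positivity)
    have step4 : (2 * c * Real.Gamma (1-τ)) * ((Real.sqrt (1 + σ ^ 2))⁻¹
          * ((Real.pi + 1) * Real.sqrt (1 + σ ^ 2))) = Real.pi := by
      rw [hc]
      field_simp
    calc c * Real.sqrt (1 + σ ^ 2)⁻¹ * Real.sqrt (hfun σ) * (B * s) ≤ _ := step1
      _ = _ := step2
      _ ≤ _ := step3
      _ = _ := step4
  -- finish: A = π / (B * s)
  have hBs_pos : 0 < B * s := mul_pos hB_pos hs_pos
  have hA_eq : A = Real.pi / (B * s) := by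
    field_simp at hABs ⊢
    linarith [hABs]
  rw [hA_eq, le_div_iff₀ hBs_pos]
  exact hmain
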